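/- Let S be a nondegenerate simplex in ℝ^d with the origin o in its interior, and let S° be its polar body. Then o is the center of mass (centroid) of S° if and only if o is the center of mass of S. -/

import Mathlib

open scoped RealInnerProductSpace
open MeasureTheory

noncomputable section

abbrev En (d : ℕ) := EuclideanSpace ℝ (Fin d)

/-- The polar of a set `s`: all `y` with `⟪x, y⟫ ≤ 1` for every `x ∈ s`. -/
def polarSet {d : ℕ} (s : Set (En d)) : Set (En d) := {y | ∀ x ∈ s, ⟪x, y⟫ ≤ 1}

/-- The center of mass (centroid) of a solid `K ⊆ ℝ^d`. -/
def centroidE {d : ℕ} (K : Set (En d)) : En d := ⨍ x in K, x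



lemma centroid_image {d : ℕ} (f : En d ≃ᵃ[ℝ] En d) (K : Set (En d))
    (hK : MeasurableSet K) (h0 : volume K ≠ 0) (htop : volume K ≠ ⊤)
    (hint : IntegrableOn (fun x => x) K volume) :
    centroidE (⇑f '' K) = f (centroidE K) := by
  set L : En d →L[ℝ] En d := LinearMap.toContinuousLinearMap (f.linear : En d →ₗ[ℝ] En d) with hL
  have hdet : L.det ≠ 0 := by
    simp only [ContinuousLinearMap.det, hL, LinearMap.coe_toContinuousLinearMap]
    exact (LinearEquiv.isUnit_det' f.linear).ne_zero
  have hfd : ∀ x ∈ K, HasFDerivWithinAt (⇑f) L K x := by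
    intro x hx
    have h1 : ⇑f = fun x => L x + f 0 := by
      funext y
      have := (f : En d →ᵃ[ℝ] En d).decomp
      rw [show (⇑f : En d → En d) = ⇑(f : En d →ᵃ[ℝ] En d) from rfl, this]
      simp [hL]
    rw [h1]
    exact ((L.hasFDerivAt).add_const (f 0)).hasFDerivWithinAt
  have hinj : Set.InjOn (⇑f) K := f.injective.injOn
  have hvol : volume (⇑f '' K) = ENNReal.ofReal |L.det| * volume K := by
    rw [← lintegral_abs_det_fderiv_eq_addHaar_image volume hK hfd hinj]
    simp [setLIntegral_const]
  have hintegral : ∫ x in ⇑f '' K, x = |L.det| • ∫ x in K, f x := by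
    rw [integral_image_eq_integral_abs_det_fderiv_smul volume hK hfd hinj (fun x => x),
      integral_smul]
  have hc : 0 < |L.det| := abs_pos.2 hdet
  have hv : (volume K).toReal ≠ 0 := by
    simp [ENNReal.toReal_ne_zero, h0, htop]
  have hIL : IntegrableOn (fun x => L x) K volume := L.integrable_comp hint
  have hI0 : IntegrableOn (fun _ => f 0) K volume :=
    integrableOn_const htop
  have hfK : ∫ x in K, f x = L (∫ x in K, x) + (volume K).toReal • f 0 := by
    have h1 : ⇑f = fun x => L x + f 0 := by
      funext y
      have := (f : En d →ᵃ[ℝ] En d).decomp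
      rw [show (⇑f : En d → En d) = ⇑(f : En d →ᵃ[ℝ] En d) from rfl, this]
      simp [hL]
    rw [h1, integral_add hIL hI0, integral_const, L.integral_comp_comm hint]
    simp [Measure.restrict_apply, MeasurableSet.univ, Set.univ_inter]
    rfl
  have hfc : f (centroidE K) = L (centroidE K) + f 0 := by
    have := (f : En d →ᵃ[ℝ] En d).decomp
    conv_lhs => rw [show (⇑f : En d → En d) = ⇑(f : En d →ᵃ[ℝ] En d) from rfl, this]
    simp [hL]
  rw [centroidE, setAverage_eq, measureReal_def, hvol, hintegral, hfK, hfc, centroidE, setAverage_eq,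
    measureReal_def]
  rw [ENNReal.toReal_mul, ENNReal.toReal_ofReal hc.le]
  rw [smul_add, smul_add, smul_smul, smul_smul, L.map_smul]
  congr 1
  · congr 1
    field_simp
  · have h1 : (|L.det| * (volume K).toReal)⁻¹ * |L.det| * (volume K).toReal = 1 := by
      field_simp
    rw [smul_smul, h1, one_smul]


lemma exists_affineEquiv_map_basis {d : ℕ} (b c : AffineBasis (Fin (d+1)) ℝ (En d)) :
    ∃ g : En d ≃ᵃ[ℝ] En d, ∀ j, g (b j) = c j := by
  set L : En d ≃ₗ[ℝ] En d := (b.basisOf 0).equiv (c.basisOf 0) (Equiv.refl _) with hLdef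
  refine ⟨((AffineEquiv.vaddConst ℝ (b 0)).symm.trans L.toAffineEquiv).trans
    (AffineEquiv.vaddConst ℝ (c 0)), fun j => ?_⟩
  simp only [AffineEquiv.trans_apply, AffineEquiv.vaddConst_symm_apply,
    LinearEquiv.coe_toAffineEquiv, AffineEquiv.vaddConst_apply]
  rcases eq_or_ne j 0 with rfl | hj
  · simp
  · have h1 : b j -ᵥ b 0 = b.basisOf 0 ⟨j, hj⟩ := (b.basisOf_apply 0 ⟨j, hj⟩).symm
    rw [h1, hLdef, Module.Basis.equiv_apply, Equiv.refl_apply, c.basisOf_apply]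
    simp

lemma centroid_simplex {d : ℕ} (b : AffineBasis (Fin (d+1)) ℝ (En d)) :
    centroidE (convexHull ℝ (Set.range ⇑b)) = ((d:ℝ)+1)⁻¹ • ∑ i, b i := by
  set K := convexHull ℝ (Set.range ⇑b) with hKdef
  have hcpt : IsCompact K := (Set.finite_range ⇑b).isCompact_convexHull ℝ
  have hK : MeasurableSet K := hcpt.isClosed.measurableSet
  have h0 : volume K ≠ 0 := by
    exact (MeasureTheory.Measure.measure_pos_of_nonempty_interior _
      ⟨_, b.centroid_mem_interior_convexHull⟩).ne'
  have htop : volume K ≠ ⊤ := hcpt.measure_lt_top.ne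
  have hint : IntegrableOn (fun x : En d => x) K volume :=
    continuous_id.continuousOn.integrableOn_compact hcpt
  set w : Fin (d+1) → ℝ := fun i => b.coord i (centroidE K) with hwdef
  have hw1 : ∑ i, w i = 1 := b.sum_coord_apply_eq_one _
  have hcomb : Finset.univ.affineCombination ℝ ⇑b w = centroidE K :=
    b.affineCombination_coord_eq_self _
  have hperm : ∀ σ : Equiv.Perm (Fin (d+1)), ∀ i, w i = w (σ⁻¹ i) := by
    intro σ i
    obtain ⟨g, hg⟩ := exists_affineEquiv_map_basis b (b.reindex σ.symm)
    have hg' : ∀ j, g (b j) = b (σ j) := by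
      intro j; rw [hg]; rfl
    have himg : ⇑g '' K = K := by
      have h5 : ⇑g '' K = ⇑g.toAffineMap '' K := rfl
      rw [h5, hKdef, AffineMap.image_convexHull, ← Set.range_comp]
      have h6 : ⇑g.toAffineMap ∘ ⇑b = ⇑b ∘ ⇑σ := by funext j; exact hg' j
      rw [h6, Set.range_comp, σ.surjective.range_eq, Set.image_univ]
    have hcent : centroidE K = g (centroidE K) := by
      conv_lhs => rw [← himg]
      exact centroid_image g K hK h0 htop hint
    have h2 : g (centroidE K) =
        Finset.univ.affineCombination ℝ (⇑b) (fun j => w (σ⁻¹ j)) := by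
      rw [← hcomb]
      show g.toAffineMap ((Finset.affineCombination ℝ Finset.univ ⇑b) w) = _
      rw [Finset.map_affineCombination Finset.univ ⇑b w hw1 g.toAffineMap]
      have h3 : ⇑g.toAffineMap ∘ ⇑b = ⇑b ∘ ⇑σ := by funext j; exact hg' j
      have hw1' : ∑ j, w (σ⁻¹ j) = 1 := by
        rw [← hw1]; exact Fintype.sum_equiv σ⁻¹ _ _ (fun j => rfl)
      rw [Finset.affineCombination_eq_linear_combination _ _ _ hw1,
        Finset.affineCombination_eq_linear_combination _ _ _ hw1']
      show ∑ j, w j • (⇑g.toAffineMap ∘ ⇑b) j = _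
      rw [h3]
      exact Fintype.sum_equiv σ (fun j => w j • b (σ j)) (fun j => w (σ⁻¹ j) • b j)
        (fun j => by simp)
    have h4 := hcent.trans h2
    have := congrArg (b.coord i) h4
    rwa [hwdef, b.coord_apply_combination_of_mem (Finset.mem_univ i)
      (by rw [← hw1]; exact Fintype.sum_equiv σ⁻¹ _ _ (fun j => rfl))] at this
  have hwc : ∀ i, w i = ((d:ℝ)+1)⁻¹ := by
    have hconst : ∀ i k, w i = w k := by
      intro i k
      have := hperm (Equiv.swap i k) i
      rwa [Equiv.swap_inv, Equiv.swap_apply_left] at this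
    intro i
    have : ∑ k, w k = ∑ _k : Fin (d+1), w i := Finset.sum_congr rfl fun k _ => hconst k i
    rw [hw1] at this
    simp only [Finset.sum_const, Finset.card_univ, Fintype.card_fin, nsmul_eq_mul] at this
    push_cast at this
    exact eq_inv_of_mul_eq_one_left (by rw [mul_comm]; exact this.symm)
  rw [← hcomb, Finset.affineCombination_eq_linear_combination _ _ _ hw1]
  rw [Finset.smul_sum]
  exact Finset.sum_congr rfl fun i _ => by rw [hwc i]

set_option maxHeartbeats 2000000 in
/-- For a nondegenerate simplex `S` in `ℝ^d` with the origin in its interior,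
the origin is the center of mass of the polar simplex `S°` if and only if it is
the center of mass of `S`. -/
theorem simplex_polar_centroid (d : ℕ) (hd : 0 < d)
    (p : Fin (d + 1) → En d) (hp : AffineIndependent ℝ p)
    (h0 : (0 : En d) ∈ interior (convexHull ℝ (Set.range p))) :
    centroidE (polarSet (convexHull ℝ (Set.range p))) = 0 ↔
      centroidE (convexHull ℝ (Set.range p)) = 0 := by
  classical
  have hspan : affineSpan ℝ (Set.range p) = ⊤ := by
    rw [← interior_convexHull_nonempty_iff_affineSpan_eq_top]
    exact ⟨0, h0⟩
  set b : AffineBasis (Fin (d+1)) ℝ (En d) := ⟨p, hp, hspan⟩ with hbdef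
  have hb : ⇑b = p := rfl
  set lam : Fin (d+1) → ℝ := fun i => b.coord i 0 with hlam
  have hlampos : ∀ i, 0 < lam i := by
    have h1 := h0
    rw [show Set.range p = Set.range ⇑b from rfl, b.interior_convexHull] at h1
    exact h1
  have hsum : ∑ i, lam i = 1 := b.sum_coord_apply_eq_one 0
  have hzero : ∑ i, lam i • p i = 0 := by
    have h1 := b.affineCombination_coord_eq_self (0 : En d)
    rwa [Finset.affineCombination_eq_linear_combination _ _ _ hsum] at h1
  have hspanV : Submodule.span ℝ (Set.range p) = ⊤ := by
    have h1 := affineSpan_le_toAffineSubspace_span (k := ℝ) (s := Set.range p)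
    rw [hspan] at h1
    exact Submodule.eq_top_iff'.2 fun x => h1 (AffineSubspace.mem_top ℝ _ x)
  have vanish : ∀ v : En d, (∀ k, ⟪p k, v⟫ = 0) → v = 0 := by
    intro v hv
    have h1 : ∀ u ∈ Submodule.span ℝ (Set.range p), ⟪u, v⟫ = 0 := by
      intro u hu
      induction hu using Submodule.span_induction with
      | mem x hx => obtain ⟨k, rfl⟩ := hx; exact hv k
      | zero => simp
      | add x y _ _ hx hy => rw [inner_add_left, hx, hy, add_zero]
      | smul c x _ hx => rw [inner_smul_left, hx, mul_zero]
    have h2 : ⟪v, v⟫ = 0 := h1 v (hspanV ▸ Submodule.mem_top)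
    exact inner_self_eq_zero.mp h2
  -- dual vectors
  set q : Fin (d+1) → En d := fun i =>
    (InnerProductSpace.toDual ℝ (En d)).symm
      (LinearMap.toContinuousLinearMap (-(lam i)⁻¹ • (b.coord i).linear)) with hqdef
  have hq : ∀ i x, ⟪x, q i⟫ = 1 - (lam i)⁻¹ * b.coord i x := by
    intro i x
    rw [real_inner_comm, hqdef]
    rw [InnerProductSpace.toDual_symm_apply]
    have h1 : (b.coord i) x = lam i + (b.coord i).linear x := by
      have := (b.coord i).decomp
      conv_lhs => rw [show ⇑(b.coord i) = _ from this]
      simp [hlam, add_comm]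
    have h2 : (LinearMap.toContinuousLinearMap (-(lam i)⁻¹ • (b.coord i).linear)) x
        = -(lam i)⁻¹ * (b.coord i).linear x := by simp
    rw [h2, h1]
    have hne := (hlampos i).ne'
    field_simp
    ring
  have hqp : ∀ i j, ⟪p j, q i⟫ = if i = j then 1 - (lam i)⁻¹ else 1 := by
    intro i j
    rw [hq i (p j), show (b.coord i) (p j) = if i = j then 1 else 0 from b.coord_apply i j]
    by_cases h : i = j <;> simp [h]
  -- polar is determined by vertices
  have hpolar : polarSet (convexHull ℝ (Set.range p)) = {y | ∀ i, ⟪p i, y⟫ ≤ 1} := by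
    ext y
    constructor
    · intro hy i
      exact hy (p i) (subset_convexHull ℝ _ (Set.mem_range_self i))
    · intro hy x hx
      have hconv : Convex ℝ {x : En d | ⟪x, y⟫ ≤ 1} :=
        convex_halfSpace_le ⟨fun a b => inner_add_left a b y,
          fun c a => real_inner_smul_left a y c⟩ 1
      have hsub : Set.range p ⊆ {x : En d | ⟪x, y⟫ ≤ 1} := by
        rintro _ ⟨i, rfl⟩; exact hy i
      exact convexHull_min hsub hconv hx
  -- q is affinely independent
  have hqind : AffineIndependent ℝ q := by
    rw [affineIndependent_iff_of_fintype]
    intro w hw hvsub i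
    have h1 : ∑ j, w j • q j = 0 := by
      rwa [Finset.weightedVSub_eq_linear_combination _ hw] at hvsub
    have h2 := congrArg (fun v => ⟪p i, v⟫) h1
    simp only [inner_sum, real_inner_smul_right, inner_zero_right] at h2
    have h3 : ∀ j, w j * ⟪p i, q j⟫ = w j - (if j = i then w i * (lam i)⁻¹ else 0) := by
      intro j
      rw [hqp j i]
      by_cases h : j = i
      · subst h; simp; ring
      · simp [h]
    rw [Finset.sum_congr rfl fun j _ => h3 j, Finset.sum_sub_distrib, hw,
      Finset.sum_ite_eq' Finset.univ i (fun _ => w i * (lam i)⁻¹)] at h2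
    simp only [Finset.mem_univ, if_true, zero_sub, neg_eq_zero] at h2
    rcases mul_eq_zero.mp h2 with h | h
    · exact h
    · exact absurd h (inv_ne_zero (hlampos i).ne')
  have hqspan : affineSpan ℝ (Set.range q) = ⊤ := by
    rw [hqind.affineSpan_eq_top_iff_card_eq_finrank_add_one]
    simp [finrank_euclideanSpace_fin]
  set bq : AffineBasis (Fin (d+1)) ℝ (En d) := ⟨q, hqind, hqspan⟩ with hbqdef
  have hbq : ⇑bq = q := rfl
  have hinnersum : ∀ (w : Fin (d+1) → ℝ) k, ⟪p k, ∑ j, w j • q j⟫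
      = ∑ j, w j - (∑ j, w j * (lam j)⁻¹ * (if j = k then 1 else 0)) := by
    intro w k
    rw [inner_sum]
    rw [← Finset.sum_sub_distrib]
    refine Finset.sum_congr rfl fun j _ => ?_
    rw [real_inner_smul_right, hqp j k]
    by_cases h : j = k
    · subst h; simp; ring
    · simp [h]
  have h0q : ∑ j, lam j • q j = 0 := by
    refine vanish _ fun k => ?_
    rw [hinnersum lam k, hsum]
    have : ∀ j, lam j * (lam j)⁻¹ * (if j = k then 1 else 0) = if j = k then 1 else 0 := by
      intro j
      rw [mul_inv_cancel₀ (hlampos j).ne', one_mul]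
    rw [Finset.sum_congr rfl fun j _ => this j, Finset.sum_ite_eq' Finset.univ k (fun _ => (1:ℝ))]
    simp
  have lamq : ∀ i, bq.coord i 0 = lam i := by
    intro i
    have h1 : Finset.univ.affineCombination ℝ (⇑bq) lam = 0 := by
      rw [Finset.affineCombination_eq_linear_combination _ _ _ hsum, hbq, h0q]
    rw [← h1, bq.coord_apply_combination_of_mem (Finset.mem_univ i) hsum]
  have h0qint : (0 : En d) ∈ interior (convexHull ℝ (Set.range q)) := by
    rw [show Set.range q = Set.range ⇑bq from rfl, bq.interior_convexHull]
    intro i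
    show 0 < bq.coord i 0
    rw [lamq i]; exact hlampos i
  have hset : {y : En d | ∀ i, ⟪p i, y⟫ ≤ 1} = convexHull ℝ (Set.range q) := by
    apply Set.Subset.antisymm
    · intro y hy
      set w : Fin (d+1) → ℝ := fun j => lam j * (1 - ⟪p j, y⟫) with hwdef
      have hwnn : ∀ j, 0 ≤ w j := fun j =>
        mul_nonneg (hlampos j).le (by linarith [hy j])
      have hwsum : ∑ j, w j = 1 := by
        have h1 : ∑ j, w j = ∑ j, lam j - ∑ j, lam j * ⟪p j, y⟫ := by
          rw [← Finset.sum_sub_distrib]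
          exact Finset.sum_congr rfl fun j _ => by ring
        have h2 : ∑ j, lam j * ⟪p j, y⟫ = ⟪∑ j, lam j • p j, y⟫ := by
          rw [sum_inner]
          exact Finset.sum_congr rfl fun j _ => (real_inner_smul_left _ _ _).symm
        rw [h1, h2, hzero, hsum]
        simp
      have hy_eq : y = ∑ j, w j • q j := by
        have h3 : ∀ k, ⟪p k, ∑ j, w j • q j - y⟫ = 0 := by
          intro k
          rw [inner_sub_right, hinnersum w k]
          have h4 : ∀ j, w j * (lam j)⁻¹ * (if j = k then 1 else 0)
              = (1 - ⟪p j, y⟫) * (if j = k then 1 else 0) := by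
            intro j
            have h5 : w j * (lam j)⁻¹ = 1 - ⟪p j, y⟫ := by
              rw [hwdef]
              show lam j * (1 - ⟪p j, y⟫) * (lam j)⁻¹ = _
              rw [mul_comm (lam j), mul_assoc, mul_inv_cancel₀ (hlampos j).ne', mul_one]
            rw [h5]
          rw [Finset.sum_congr rfl fun j _ => h4 j, hwsum]
          rw [show ∀ (f : Fin (d+1) → ℝ), ∑ j, f j * (if j = k then 1 else 0)
              = ∑ j, if j = k then f j else 0 from fun f => Finset.sum_congr rfl
                fun j _ => by by_cases h : j = k <;> simp [h]]
          rw [Finset.sum_ite_eq' Finset.univ k]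
          simp
        have := vanish _ h3
        rw [sub_eq_zero] at this
        exact this.symm
      rw [hy_eq]
      exact (convex_convexHull ℝ _).sum_mem (fun j _ => hwnn j) hwsum
        (fun j _ => subset_convexHull ℝ _ (Set.mem_range_self j))
    · intro y hy i
      have hconv : Convex ℝ {x : En d | ⟪p i, x⟫ ≤ 1} :=
        convex_halfSpace_le ⟨fun a c => inner_add_right (p i) a c,
          fun c a => real_inner_smul_right (p i) a c⟩ 1
      have hsub : Set.range q ⊆ {x : En d | ⟪p i, x⟫ ≤ 1} := by
        rintro _ ⟨j, rfl⟩
        show ⟪p i, q j⟫ ≤ 1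
        rw [hqp j i]
        by_cases h : j = i
        · rw [if_pos h]
          have := inv_pos.2 (hlampos j)
          linarith
        · rw [if_neg h]
      exact convexHull_min hsub hconv hy
  have hite : ∀ (f : Fin (d+1) → ℝ) (k : Fin (d+1)),
      ∑ j, f j * (if j = k then (1:ℝ) else 0) = f k := by
    intro f k
    simp [mul_ite, mul_one, mul_zero, Finset.sum_ite_eq']
  have hd1 : ((d:ℝ)+1)⁻¹ ≠ 0 := by positivity
  have hqiff : (∑ i, q i) = 0 ↔ ∀ i, lam i = ((d:ℝ)+1)⁻¹ := by
    have hinner1 : ∀ k, ⟪p k, ∑ j, q j⟫ = ((d:ℝ)+1) - (lam k)⁻¹ := by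
      intro k
      have h1 : ∑ j, q j = ∑ j, (1:ℝ) • q j := by
        exact Finset.sum_congr rfl fun j _ => (one_smul ℝ (q j)).symm
      rw [h1, hinnersum (fun _ => 1) k]
      have h2 : ∑ _j : Fin (d+1), (1:ℝ) = ((d:ℝ)+1) := by
        simp [Finset.sum_const, Finset.card_univ]
      have h3 : ∑ j, (1:ℝ) * (lam j)⁻¹ * (if j = k then (1:ℝ) else 0) = (lam k)⁻¹ := by
        have := hite (fun j => (1:ℝ) * (lam j)⁻¹) k
        simpa using this
      rw [h2, h3]
    constructor
    · intro hs i
      have h1 := hinner1 i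
      rw [hs, inner_zero_right] at h1
      have h2 : (lam i)⁻¹ = ((d:ℝ)+1) := by linarith
      rw [← h2, inv_inv]
    · intro hl
      refine vanish _ fun k => ?_
      rw [hinner1 k, hl k, inv_inv]
      ring
  have hpiff : (∑ i, p i) = 0 ↔ ∀ i, lam i = ((d:ℝ)+1)⁻¹ := by
    constructor
    · intro hs i
      have hc1 : ∑ _j : Fin (d+1), ((d:ℝ)+1)⁻¹ = 1 := by
        simp only [Finset.sum_const, Finset.card_univ, Fintype.card_fin, nsmul_eq_mul]
        push_cast
        field_simp
      have hc2 : Finset.univ.affineCombination ℝ (⇑b) (fun _ => ((d:ℝ)+1)⁻¹) = 0 := by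
        rw [Finset.affineCombination_eq_linear_combination _ _ _ hc1]
        rw [hb, ← Finset.smul_sum, hs, smul_zero]
      have h3 := b.coord_apply_combination_of_mem (Finset.mem_univ i) hc1
        (w := fun _ => ((d:ℝ)+1)⁻¹)
      rw [hc2] at h3
      exact h3
    · intro hl
      have h1 : ((d:ℝ)+1)⁻¹ • ∑ i, p i = 0 := by
        rw [Finset.smul_sum, ← hzero]
        exact Finset.sum_congr rfl fun i _ => by rw [hl i]
      rcases smul_eq_zero.mp h1 with h | h
      · exact absurd h hd1
      · exact h
  have hcentp : centroidE (convexHull ℝ (Set.range p)) = ((d:ℝ)+1)⁻¹ • ∑ i, p i := by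
    have := centroid_simplex b
    rwa [hb] at this
  have hcentq : centroidE (convexHull ℝ (Set.range q)) = ((d:ℝ)+1)⁻¹ • ∑ i, q i := by
    have := centroid_simplex bq
    rwa [hbq] at this
  rw [hpolar, hset, hcentq, hcentp, smul_eq_zero, smul_eq_zero]
  simp only [hd1, false_or]
  rw [hqiff, hpiff]
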